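/- With D as defined below, if the equation Φ(x) = x has exactly S solutions in [0,1], then min over 0 ≤ x ≤ 1 of D(x) ≤ −1/(4S). -/

import Mathlib

open MeasureTheory intervalIntegral Set Metric


lemma measurable_real_sign : Measurable Real.sign := by
  have hs : Real.sign = fun r : ℝ => if r < 0 then (-1:ℝ) else if 0 < r then 1 else 0 := by
    funext r; rfl
  rw [hs]
  exact Measurable.ite (measurableSet_lt measurable_id measurable_const) measurable_const
    (Measurable.ite (measurableSet_lt measurable_const measurable_id) measurable_const
      measurable_const)

lemma abs_real_sign_le (y : ℝ) : |Real.sign y| ≤ 1 := by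
  rcases lt_trichotomy y 0 with h|h|h
  · rw [Real.sign_of_neg h]; norm_num
  · rw [h, Real.sign_zero]; norm_num
  · rw [Real.sign_of_pos h]; norm_num

lemma tri (p r : ℝ) (hr : 0 ≤ r) :
    (∫ u in (0:ℝ)..1, max (r - |u - p|) 0) ≤ r ^ 2 := by
  set g : ℝ → ℝ := fun u => max (r - |u - p|) 0 with hg
  have gcont : Continuous g := (continuous_const.sub (continuous_id.sub continuous_const).abs).max continuous_const
  have gnonneg : ∀ u, 0 ≤ g u := fun u => le_max_right _ _
  have gzero : ∀ u, u ∉ Set.Ioc (p - r) (p + r) → g u = 0 := by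
    intro u hu
    have h2 : r - |u - p| ≤ 0 := by
      rcases le_or_gt u (p - r) with h | h
      · have : r ≤ |u - p| := by rw [abs_sub_comm, abs_of_nonneg (by linarith)]; linarith
        linarith
      · have hu2 : p + r < u := by
          by_contra hc; push_neg at hc; exact hu ⟨h, hc⟩
        have : r ≤ |u - p| := by rw [abs_of_pos (by linarith)]; linarith
        linarith
    simp [hg, max_eq_right h2]
  have gint : Integrable g := by
    apply gcont.integrable_of_hasCompactSupport
    apply HasCompactSupport.intro (isCompact_Icc (a := p - r) (b := p + r))
    intro u hu
    exact gzero u (fun hmem => hu ⟨le_of_lt hmem.1, hmem.2⟩)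
  have step1 : (∫ u in (0:ℝ)..1, g u) ≤ ∫ u, g u := by
    rw [intervalIntegral.integral_of_le (by norm_num : (0:ℝ) ≤ 1)]
    exact setIntegral_le_integral gint (ae_of_all _ gnonneg)
  have step2 : (∫ u, g u) = ∫ u in (p - r)..(p + r), g u := by
    rw [intervalIntegral.integral_of_le (by linarith : p - r ≤ p + r)]
    exact (setIntegral_eq_integral_of_forall_compl_eq_zero (fun u hu => gzero u hu)).symm
  have step3 : (∫ u in (p - r)..(p + r), g u) = r ^ 2 := by
    have hcomp : (∫ u in (p - r)..(p + r), g u) = ∫ v in (-r)..r, max (r - |v|) 0 := by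
      have := intervalIntegral.integral_comp_sub_right (a := p - r) (b := p + r)
        (fun v => max (r - |v|) 0) p
      simpa using this
    rw [hcomp]
    have hsplit : (∫ v in (-r)..r, max (r - |v|) 0)
        = (∫ v in (-r)..(0:ℝ), max (r - |v|) 0) + ∫ v in (0:ℝ)..r, max (r - |v|) 0 := by
      rw [intervalIntegral.integral_add_adjacent_intervals] <;>
        exact ((continuous_const.sub continuous_abs).max continuous_const).intervalIntegrable _ _
    have h1 : (∫ v in (0:ℝ)..r, max (r - |v|) 0) = ∫ v in (0:ℝ)..r, (r - v) := by
      apply intervalIntegral.integral_congr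
      intro v hv
      rw [Set.uIcc_of_le hr] at hv
      simp only [abs_of_nonneg hv.1]
      rw [max_eq_left (by linarith [hv.2])]
    have h2 : (∫ v in (-r)..(0:ℝ), max (r - |v|) 0) = ∫ v in (-r)..(0:ℝ), (r + v) := by
      apply intervalIntegral.integral_congr
      intro v hv
      rw [Set.uIcc_of_le (by linarith : -r ≤ (0:ℝ))] at hv
      simp only [abs_of_nonpos hv.2]
      rw [max_eq_left (by linarith [hv.1])]; ring_nf
    rw [hsplit, h1, h2]
    have e1 : (∫ v in (0:ℝ)..r, (r - v)) = r ^ 2 - r ^ 2 / 2 := by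
      rw [intervalIntegral.integral_sub (intervalIntegrable_const) (intervalIntegral.intervalIntegrable_id)]
      simp [integral_id]; ring
    have e2 : (∫ v in (-r)..(0:ℝ), (r + v)) = r ^ 2 - r ^ 2 / 2 := by
      rw [intervalIntegral.integral_add (intervalIntegrable_const) (intervalIntegral.intervalIntegrable_id)]
      simp [integral_id]; ring
    rw [e1, e2]; ring
  linarith [step1, step2, step3]



lemma distlb (F : Set ℝ) (hfin : F.Finite) (hne : F.Nonempty) :
    1 / (4 * (F.ncard : ℝ)) ≤ ∫ u in (0:ℝ)..1, Metric.infDist u F := by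
  set S : ℕ := F.ncard with hS
  have hS1 : 1 ≤ S := (Set.ncard_pos hfin).2 hne
  have hSpos : (0:ℝ) < S := by exact_mod_cast hS1
  set r : ℝ := 1 / (2 * S) with hr
  clear_value r
  have hrpos : 0 < r := by rw [hr]; positivity
  set T : Finset ℝ := hfin.toFinset with hT
  have hTcard : T.card = S := by rw [hT, hS, Set.ncard_eq_toFinset_card _ hfin]
  have contp : ∀ p : ℝ, Continuous fun u : ℝ => max (r - |u - p|) 0 := by
    intro p; fun_prop
  -- pointwise bound
  have pw : ∀ u : ℝ, r - ∑ p ∈ T, max (r - |u - p|) 0 ≤ Metric.infDist u F := by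
    intro u
    have hsum0 : (0:ℝ) ≤ ∑ p ∈ T, max (r - |u - p|) 0 :=
      Finset.sum_nonneg fun p _ => le_max_right _ _
    rcases le_or_gt r (Metric.infDist u F) with h | h
    · linarith
    · obtain ⟨p, hpF, hdist⟩ := (hfin.isClosed).exists_infDist_eq_dist hne u
      have hd : Metric.infDist u F = |u - p| := by rw [hdist, Real.dist_eq]
      have hp : max (r - |u - p|) 0 = r - Metric.infDist u F := by
        rw [hd, max_eq_left (by rw [hd] at h; linarith)]
      have hle : max (r - |u - p|) 0 ≤ ∑ q ∈ T, max (r - |u - q|) 0 :=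
        Finset.single_le_sum (f := fun q => max (r - |u - q|) 0)
          (fun q _ => le_max_right _ _) (hfin.mem_toFinset.2 hpF)
      linarith [hp ▸ hle]
  -- integrate
  have intL : ∀ p : ℝ, IntervalIntegrable (fun u => max (r - |u - p|) 0) volume 0 1 :=
    fun p => (contp p).intervalIntegrable _ _
  have intSum : IntervalIntegrable (fun u => r - ∑ p ∈ T, max (r - |u - p|) 0) volume 0 1 := by
    apply IntervalIntegrable.sub intervalIntegrable_const
    exact (continuous_finset_sum T fun p _ => contp p).intervalIntegrable _ _
  have intD : IntervalIntegrable (fun u => Metric.infDist u F) volume 0 1 :=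
    (Metric.continuous_infDist_pt F).intervalIntegrable _ _
  have mono := intervalIntegral.integral_mono_on (by norm_num : (0:ℝ) ≤ 1) intSum intD
    (fun u _ => pw u)
  have eval : (∫ u in (0:ℝ)..1, (r - ∑ p ∈ T, max (r - |u - p|) 0)) ≥ 1 / (4 * S) := by
    rw [intervalIntegral.integral_sub intervalIntegrable_const ((continuous_finset_sum T fun p _ => contp p).intervalIntegrable _ _)]
    rw [intervalIntegral.integral_finset_sum (fun p _ => intL p)]
    have hb : (∑ p ∈ T, ∫ u in (0:ℝ)..1, max (r - |u - p|) 0) ≤ S * r ^ 2 := by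
      calc (∑ p ∈ T, ∫ u in (0:ℝ)..1, max (r - |u - p|) 0)
          ≤ ∑ p ∈ T, r ^ 2 := Finset.sum_le_sum fun p _ => tri p r hrpos.le
        _ = S * r ^ 2 := by rw [Finset.sum_const, hTcard]; ring
    have hc : (∫ _ in (0:ℝ)..1, (r:ℝ)) = r := by simp
    have hSne : (S:ℝ) ≠ 0 := ne_of_gt hSpos
    have hval : r - S * r ^ 2 = 1 / (4 * S) := by
      rw [hr]; field_simp; ring
    rw [hc]
    linarith
  linarith [mono, eval]


lemma fub (f g : ℝ → ℝ) (hf : Measurable f) (hg : Measurable g) (M : ℝ)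
    (hbf : ∀ t, |f t| ≤ M) (hbg : ∀ t, |g t| ≤ M) :
    (∫ x in (0:ℝ)..1, (∫ t in (0:ℝ)..x, f t) * g x)
      = ∫ t in (0:ℝ)..1, f t * ∫ x in t..(1:ℝ), g x := by
  set μ := volume.restrict (Set.Ioc (0:ℝ) 1) with hμ
  haveI : IsFiniteMeasure μ := by
    constructor
    rw [hμ, Measure.restrict_apply_univ]
    exact measure_Ioc_lt_top
  set K : ℝ × ℝ → ℝ := fun p => if p.2 ≤ p.1 then f p.2 * g p.1 else 0 with hK
  have hM0 : 0 ≤ M := le_trans (abs_nonneg _) (hbf 0)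
  have measK : Measurable K := by
    apply Measurable.ite
    · exact measurableSet_le measurable_snd measurable_fst
    · exact (hf.comp measurable_snd).mul (hg.comp measurable_fst)
    · exact measurable_const
  have intK : Integrable (fun p : ℝ × ℝ => K (p.1, p.2)) (μ.prod μ) := by
    apply Integrable.mono' (integrable_const (M * M)) (by exact measK.aestronglyMeasurable)
    apply ae_of_all
    intro p
    rw [hK]
    simp only [Real.norm_eq_abs]
    split_ifs
    · exact (abs_mul _ _).le.trans (mul_le_mul (hbf _) (hbg _) (abs_nonneg _) hM0)
    · simpa using mul_nonneg hM0 hM0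
  have swap := MeasureTheory.integral_integral_swap (μ := μ) (ν := μ)
    (f := fun x t => K (x, t)) intK
  -- LHS identification
  have lhs : (∫ x in (0:ℝ)..1, (∫ t in (0:ℝ)..x, f t) * g x) = ∫ x, (∫ t, K (x, t) ∂μ) ∂μ := by
    rw [intervalIntegral.integral_of_le (by norm_num : (0:ℝ) ≤ 1)]
    apply setIntegral_congr_fun measurableSet_Ioc
    intro x hx
    show (∫ t in (0:ℝ)..x, f t) * g x = ∫ t, K (x, t) ∂μ
    have h1 : (fun t => K (x, t)) = (Set.Iic x).indicator (fun t => f t * g x) := by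
      funext t; simp [hK, Set.indicator_apply, Set.mem_Iic]
    rw [h1, hμ, setIntegral_indicator measurableSet_Iic]
    have h2 : Set.Ioc (0:ℝ) 1 ∩ Set.Iic x = Set.Ioc 0 x := by
      rw [Set.Ioc_inter_Iic, min_eq_right hx.2]
    rw [h2, intervalIntegral.integral_of_le hx.1.le]
    exact (MeasureTheory.integral_mul_const _ _).symm
  -- RHS identification
  have rhs : (∫ t in (0:ℝ)..1, f t * ∫ x in t..(1:ℝ), g x) = ∫ t, (∫ x, K (x, t) ∂μ) ∂μ := by
    rw [intervalIntegral.integral_of_le (by norm_num : (0:ℝ) ≤ 1)]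
    apply setIntegral_congr_fun measurableSet_Ioc
    intro t ht
    show f t * (∫ x in t..(1:ℝ), g x) = ∫ x, K (x, t) ∂μ
    have h1 : (fun x => K (x, t)) = (Set.Ici t).indicator (fun x => f t * g x) := by
      funext x; simp [hK, Set.indicator_apply, Set.mem_Ici]
    rw [h1, hμ, setIntegral_indicator measurableSet_Ici]
    have h2 : Set.Ioc (0:ℝ) 1 ∩ Set.Ici t = Set.Icc t 1 := by
      ext y
      simp only [Set.mem_inter_iff, Set.mem_Ioc, Set.mem_Ici, Set.mem_Icc]
      constructor
      · rintro ⟨⟨_, hy1⟩, hy2⟩; exact ⟨hy2, hy1⟩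
      · rintro ⟨hy1, hy2⟩; exact ⟨⟨lt_of_lt_of_le ht.1 hy1, hy2⟩, hy1⟩
    rw [h2, integral_Icc_eq_integral_Ioc, intervalIntegral.integral_of_le ht.2]
    exact (MeasureTheory.integral_const_mul _ _).symm
  rw [lhs, rhs]
  exact swap





/-- if the equation `Φ(x) = x` has exactly `S` solutions in `[0,1]`, then
`min_{0≤x≤1} D(x) ≤ −1/(4S)`. -/
theorem stmt_15 (φ Φ : ℝ → ℝ) (c C : ℝ) (hc : 0 < c)
    (hφcont : ContinuousOn φ (Set.Icc 0 1))
    (hφ : ∀ t ∈ Set.Icc (0 : ℝ) 1, c ≤ φ t ∧ φ t ≤ C)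
    (hint : (∫ t in (0 : ℝ)..1, φ t) = 1)
    (hΦ : ∀ x ∈ Set.Icc (0 : ℝ) 1, Φ x = ∫ t in (0 : ℝ)..x, φ t)
    (hfin : {x ∈ Set.Icc (0 : ℝ) 1 | Φ x = x}.Finite)
    (D : ℝ → ℝ)
    (hD : ∀ x, D x = (∫ t in (0 : ℝ)..x, Real.sign (Φ t - t) * Φ t * φ t) +
      (∫ t in x..(1 : ℝ), Real.sign (Φ t - t) * (Φ t - 1) * φ t) + |x - Φ x|)
    (S : ℕ) (hS : {x ∈ Set.Icc (0 : ℝ) 1 | Φ x = x}.ncard = S) :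
    sInf (D '' Set.Icc (0 : ℝ) 1) ≤ -(1 / (4 * (S : ℝ))) := by
  have h01 : (0:ℝ) ≤ 1 := zero_le_one
  have mem0 : (0:ℝ) ∈ Icc (0:ℝ) 1 := ⟨le_refl 0, h01⟩
  have mem1 : (1:ℝ) ∈ Icc (0:ℝ) 1 := ⟨h01, le_refl 1⟩
  -- clamp
  set proj : ℝ → ℝ := fun x => min (max x 0) 1 with hproj
  have projmem : ∀ x, proj x ∈ Icc (0:ℝ) 1 :=
    fun x => ⟨le_min (le_max_right _ _) h01, min_le_right _ _⟩
  have projcont : Continuous proj := (continuous_id.max continuous_const).min continuous_const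
  have projeq : ∀ x ∈ Icc (0:ℝ) 1, proj x = x := by
    intro x hx; rw [hproj]; simp only [max_eq_left hx.1, min_eq_left hx.2]
  -- global versions
  set φb : ℝ → ℝ := fun x => φ (proj x) with hφb
  have φbcont : Continuous φb := hφcont.comp_continuous projcont projmem
  have φbeq : ∀ x ∈ Icc (0:ℝ) 1, φb x = φ x := by
    intro x hx; rw [hφb]; simp only [projeq x hx]
  have φbpos : ∀ x, c ≤ φb x ∧ φb x ≤ C := fun x => hφ _ (projmem x)
  have φbnn : ∀ x, 0 ≤ φb x := fun x => le_trans hc.le (φbpos x).1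
  have hC : (0:ℝ) < C := lt_of_lt_of_le hc (le_trans (φbpos 0).1 (φbpos 0).2)
  set Φb : ℝ → ℝ := fun x => ∫ t in (0:ℝ)..x, φb t with hΦb
  have Φbcont : Continuous Φb :=
    intervalIntegral.continuous_primitive (fun a b => φbcont.intervalIntegrable a b) 0
  have intcongr : ∀ a b : ℝ, a ∈ Icc (0:ℝ) 1 → b ∈ Icc (0:ℝ) 1 →
      (∫ t in a..b, φb t) = ∫ t in a..b, φ t := by
    intro a b ha hb
    apply intervalIntegral.integral_congr
    intro t ht
    apply φbeq
    exact ⟨le_trans (le_min ha.1 hb.1) ht.1, le_trans ht.2 (max_le ha.2 hb.2)⟩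
  have Φbeq : ∀ x ∈ Icc (0:ℝ) 1, Φb x = Φ x := by
    intro x hx; rw [hΦb, hΦ x hx]; exact intcongr 0 x mem0 hx
  have Φb0 : Φb 0 = 0 := by rw [hΦb]; dsimp only; exact intervalIntegral.integral_same
  have Φb1 : Φb 1 = 1 := by rw [hΦb]; dsimp only; rw [intcongr 0 1 mem0 mem1]; exact hint
  have Φbdiff : ∀ a b : ℝ, Φb b - Φb a = ∫ t in a..b, φb t := by
    intro a b
    have := intervalIntegral.integral_add_adjacent_intervals
      (φbcont.intervalIntegrable (μ := volume) 0 a) (φbcont.intervalIntegrable (μ := volume) a b)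
    rw [hΦb]; dsimp only; linarith
  have ΦbIcc : ∀ x ∈ Icc (0:ℝ) 1, Φb x ∈ Icc (0:ℝ) 1 := by
    intro x hx
    constructor
    · rw [hΦb]
      exact intervalIntegral.integral_nonneg hx.1 (fun t _ => φbnn t)
    · have h2 : Φb 1 - Φb x = ∫ t in x..(1:ℝ), φb t := Φbdiff x 1
      have h3 : 0 ≤ ∫ t in x..(1:ℝ), φb t :=
        intervalIntegral.integral_nonneg hx.2 (fun t _ => φbnn t)
      rw [Φb1] at h2; linarith
  have Φbderiv : ∀ x : ℝ, HasDerivAt Φb (φb x) x := by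
    intro x
    rw [hΦb]
    exact intervalIntegral.integral_hasDerivAt_right (φbcont.intervalIntegrable 0 x)
      (φbcont.stronglyMeasurable.stronglyMeasurableAtFilter) φbcont.continuousAt
  -- sign function
  set ψ : ℝ → ℝ := fun t => Real.sign (Φb t - t) with hψ
  have ψmeas : Measurable ψ := measurable_real_sign.comp (Φbcont.sub continuous_id).measurable
  have ψabs : ∀ t, |ψ t| ≤ 1 := fun t => abs_real_sign_le _
  set h : ℝ → ℝ := fun t => ψ t * φb t with hh
  have hmeas : Measurable h := ψmeas.mul φbcont.measurable
  have habs : ∀ t, |h t| ≤ C := by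
    intro t
    rw [hh]; dsimp only
    rw [abs_mul, abs_of_nonneg (φbnn t)]
    calc |ψ t| * φb t ≤ 1 * C :=
          mul_le_mul (ψabs t) (φbpos t).2 (φbnn t) zero_le_one
      _ = C := one_mul C
  have hintg : ∀ a b : ℝ, IntervalIntegrable h volume a b := by
    intro a b
    rw [intervalIntegrable_iff]
    haveI : IsFiniteMeasure (volume.restrict (uIoc a b)) := by
      constructor; rw [Measure.restrict_apply_univ]; exact measure_Ioc_lt_top
    apply Integrable.mono' (integrable_const C) hmeas.aestronglyMeasurable.restrict
    exact ae_of_all _ (fun t => habs t)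
  -- integrability of products ψ * (continuous)
  have intvl : ∀ (u : ℝ → ℝ), Continuous u → ∀ a b : ℝ,
      IntervalIntegrable (fun t => ψ t * u t) volume a b := by
    intro u hu a b
    rw [intervalIntegrable_iff]
    haveI : IsFiniteMeasure (volume.restrict (uIoc a b)) := by
      constructor; rw [Measure.restrict_apply_univ]; exact measure_Ioc_lt_top
    obtain ⟨M, hM⟩ := (isCompact_uIcc (a := a) (b := b)).exists_bound_of_continuousOn
      hu.continuousOn
    apply Integrable.mono' (integrable_const M)
      ((ψmeas.mul hu.measurable).aestronglyMeasurable.restrict)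
    rw [ae_restrict_iff' measurableSet_uIoc]
    apply ae_of_all
    intro t ht
    have htIcc : t ∈ uIcc a b := uIoc_subset_uIcc ht
    rw [Real.norm_eq_abs]; show |ψ t * u t| ≤ M; rw [abs_mul]
    calc |ψ t| * |u t| ≤ 1 * M := by
          apply mul_le_mul (ψabs t) ?_ (abs_nonneg _) zero_le_one
          have := hM t htIcc; rwa [Real.norm_eq_abs] at this
      _ = M := one_mul M
  set W : ℝ → ℝ := fun x => ∫ t in (0:ℝ)..x, h t with hW
  have Wcont : Continuous W := intervalIntegral.continuous_primitive hintg 0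
  have Wdiff : ∀ a b : ℝ, W b - W a = ∫ t in a..b, h t := by
    intro a b
    have := intervalIntegral.integral_add_adjacent_intervals (hintg 0 a) (hintg a b)
    rw [hW]; dsimp only; linarith
  -- fixed point set
  set F := {x ∈ Set.Icc (0:ℝ) 1 | Φ x = x} with hF
  have hFIcc : F ⊆ Icc (0:ℝ) 1 := fun x hx => hx.1
  have hF0 : (0:ℝ) ∈ F := by
    refine ⟨mem0, ?_⟩
    rw [hΦ 0 mem0]; exact intervalIntegral.integral_same
  have hF1 : (1:ℝ) ∈ F := by
    refine ⟨mem1, ?_⟩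
    rw [hΦ 1 mem1]; exact hint
  have hFfix : ∀ p ∈ F, Φb p = p := fun p hp => (Φbeq p hp.1).trans hp.2
  have hFco : ∀ t ∈ Icc (0:ℝ) 1, Φb t = t → t ∈ F :=
    fun t ht hfix => ⟨ht, ((Φbeq t ht).symm.trans hfix)⟩
  set K0 : ℝ := ∫ t in (0:ℝ)..1, ψ t * ((Φb t - 1) * φb t) with hK0
  -- Claim A
  have claimA : ∀ x ∈ Icc (0:ℝ) 1, D x = K0 + W x + |x - Φb x| := by
    intro x hx
    have e1 : (∫ t in (0:ℝ)..x, Real.sign (Φ t - t) * Φ t * φ t)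
        = ∫ t in (0:ℝ)..x, ψ t * (Φb t * φb t) := by
      apply intervalIntegral.integral_congr
      intro t ht
      have htIcc : t ∈ Icc (0:ℝ) 1 :=
        ⟨le_trans (le_min le_rfl hx.1) ht.1, le_trans ht.2 (max_le h01 hx.2)⟩
      rw [hψ]; dsimp only
      rw [← Φbeq t htIcc, ← φbeq t htIcc]; ring
    have e2 : (∫ t in x..(1:ℝ), Real.sign (Φ t - t) * (Φ t - 1) * φ t)
        = ∫ t in x..(1:ℝ), ψ t * ((Φb t - 1) * φb t) := by
      apply intervalIntegral.integral_congr
      intro t ht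
      have htIcc : t ∈ Icc (0:ℝ) 1 :=
        ⟨le_trans (le_min hx.1 h01) ht.1, le_trans ht.2 (max_le hx.2 le_rfl)⟩
      rw [hψ]; dsimp only
      rw [← Φbeq t htIcc, ← φbeq t htIcc]; ring
    have adj : (∫ t in (0:ℝ)..x, ψ t * ((Φb t - 1) * φb t))
        + (∫ t in x..(1:ℝ), ψ t * ((Φb t - 1) * φb t)) = K0 := by
      rw [hK0]
      exact intervalIntegral.integral_add_adjacent_intervals
        (intvl _ ((Φbcont.sub continuous_const).mul φbcont) 0 x)
        (intvl _ ((Φbcont.sub continuous_const).mul φbcont) x 1)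
    have diff : (∫ t in (0:ℝ)..x, ψ t * (Φb t * φb t))
        - (∫ t in (0:ℝ)..x, ψ t * ((Φb t - 1) * φb t)) = W x := by
      rw [← intervalIntegral.integral_sub (intvl (fun t => Φb t * φb t) (Φbcont.mul φbcont) 0 x)
        (intvl (fun t => (Φb t - 1) * φb t) ((Φbcont.sub continuous_const).mul φbcont) 0 x)]
      rw [hW]; dsimp only
      apply intervalIntegral.integral_congr
      intro t _
      rw [hh]; dsimp only; ring
    have habsx : |x - Φ x| = |x - Φb x| := by rw [Φbeq x hx]
    rw [hD x, e1, e2, ← habsx]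
    linarith
  -- bounded below
  have Wbound : ∀ x ∈ Icc (0:ℝ) 1, |W x| ≤ C := by
    intro x hx
    rw [hW]; dsimp only
    have := intervalIntegral.norm_integral_le_of_norm_le_const
      (f := h) (C := C) (a := 0) (b := x) (fun t _ => by
        rw [Real.norm_eq_abs]; exact habs t)
    rw [Real.norm_eq_abs] at this
    calc |∫ t in (0:ℝ)..x, h t| ≤ C * |x - 0| := this
      _ ≤ C * 1 := by
          apply mul_le_mul_of_nonneg_left _ hC.le
          rw [sub_zero, abs_of_nonneg hx.1]; exact hx.2
      _ = C := mul_one C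
  have K0bound : |K0| ≤ C := by
    rw [hK0]
    have := intervalIntegral.norm_integral_le_of_norm_le_const
      (f := fun t => ψ t * ((Φb t - 1) * φb t)) (C := C) (a := 0) (b := 1) ?_
    · rw [Real.norm_eq_abs] at this; simpa using this
    · intro t ht
      have htIcc : t ∈ Icc (0:ℝ) 1 := by
        rw [uIoc_of_le h01] at ht; exact ⟨ht.1.le, ht.2⟩
      have hΦt := ΦbIcc t htIcc
      rw [Real.norm_eq_abs, abs_mul, abs_mul]
      have h1 : |Φb t - 1| ≤ 1 := by rw [abs_le]; constructor <;> [linarith [hΦt.1]; linarith [hΦt.2]]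
      have h2 : |φb t| ≤ C := by rw [abs_of_nonneg (φbnn t)]; exact (φbpos t).2
      calc |ψ t| * (|Φb t - 1| * |φb t|) ≤ 1 * (1 * C) := by
            apply mul_le_mul (ψabs t) _ (by positivity) zero_le_one
            exact mul_le_mul h1 h2 (abs_nonneg _) zero_le_one
        _ = C := by ring
  have hbdd : BddBelow (D '' Icc (0:ℝ) 1) := by
    refine ⟨-(2*C), ?_⟩
    rintro y ⟨x, hx, rfl⟩
    rw [claimA x hx]
    have := abs_le.1 (Wbound x hx)
    have := abs_le.1 K0bound
    have := abs_nonneg (x - Φb x)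
    linarith
  -- Claim C : pointwise comparison with a fixed point
  have claimC : ∀ x ∈ Icc (0:ℝ) 1, ∃ p ∈ F, Metric.infDist (Φb x) F ≤ W x - W p := by
    intro x hx
    rcases lt_trichotomy (Φb x) x with hlt | heq | hgt
    · -- Φb x < x : take next fixed point above
      set Fx := F ∩ Ici x with hFx
      have hne : (1:ℝ) ∈ Fx := ⟨hF1, hx.2⟩
      have hfinx : Fx.Finite := hfin.inter_of_left _
      set q := sInf Fx with hq
      have hqmem : q ∈ Fx := Set.Nonempty.csInf_mem ⟨1, hne⟩ hfinx
      have hqF : q ∈ F := hqmem.1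
      have hxq : x ≤ q := hqmem.2
      have hqIcc : q ∈ Icc (0:ℝ) 1 := hFIcc hqF
      have hlb : ∀ z ∈ Fx, q ≤ z := fun z hz => csInf_le hfinx.bddBelow hz
      have sgn : ∀ t ∈ Ico x q, Φb t < t := by
        intro t ht
        have htIcc : t ∈ Icc (0:ℝ) 1 := ⟨le_trans hx.1 ht.1, le_trans ht.2.le hqIcc.2⟩
        rcases lt_trichotomy (Φb t) t with h1 | h1 | h1
        · exact h1
        · exfalso
          have : t ∈ Fx := ⟨hFco t htIcc h1, ht.1⟩
          exact absurd (hlb t this) (not_le.2 ht.2)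
        · exfalso
          have econt : ContinuousOn (fun s => Φb s - s) (Icc x t) :=
            (Φbcont.sub continuous_id).continuousOn
          have hmem : (0:ℝ) ∈ Icc ((fun s => Φb s - s) x) ((fun s => Φb s - s) t) := by
            constructor <;> dsimp only <;> linarith
          obtain ⟨z, hz, hz0⟩ := intermediate_value_Icc ht.1 econt hmem
          have hzIcc : z ∈ Icc (0:ℝ) 1 := ⟨le_trans hx.1 hz.1, le_trans hz.2 htIcc.2⟩
          have hzfix : Φb z = z := by dsimp only at hz0; linarith
          have hzFx : z ∈ Fx := ⟨hFco z hzIcc hzfix, hz.1⟩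
          have := hlb z hzFx
          have hzq : z < q := lt_of_le_of_lt hz.2 ht.2
          linarith
      have hWq : W q - W x = -(Φb q - Φb x) := by
        rw [Wdiff x q, Φbdiff x q]
        rw [intervalIntegral.integral_of_le hxq, intervalIntegral.integral_of_le hxq]
        rw [MeasureTheory.integral_Ioc_eq_integral_Ioo,
          MeasureTheory.integral_Ioc_eq_integral_Ioo, ← MeasureTheory.integral_neg]
        apply setIntegral_congr_fun measurableSet_Ioo
        intro t ht
        have : Φb t < t := sgn t ⟨ht.1.le, ht.2⟩
        rw [hh, hψ]; dsimp only
        rw [Real.sign_of_neg (by linarith : Φb t - t < 0)]; ring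
      refine ⟨q, hqF, ?_⟩
      have hqfix : Φb q = q := hFfix q hqF
      have hd : Metric.infDist (Φb x) F ≤ dist (Φb x) q := Metric.infDist_le_dist_of_mem hqF
      rw [Real.dist_eq, abs_of_nonpos (by linarith : Φb x - q ≤ 0)] at hd
      linarith
    · -- fixed point
      refine ⟨x, hFco x hx heq, ?_⟩
      have hd : Metric.infDist (Φb x) F ≤ dist (Φb x) x :=
        Metric.infDist_le_dist_of_mem (hFco x hx heq)
      rw [Real.dist_eq, heq, sub_self, abs_zero] at hd
      rw [heq]
      simpa using hd
    · -- x < Φb x : take previous fixed point below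
      set Fx := F ∩ Iic x with hFx
      have hne : (0:ℝ) ∈ Fx := ⟨hF0, hx.1⟩
      have hfinx : Fx.Finite := hfin.inter_of_left _
      set p := sSup Fx with hp
      have hpmem : p ∈ Fx := Set.Nonempty.csSup_mem ⟨0, hne⟩ hfinx
      have hpF : p ∈ F := hpmem.1
      have hpx : p ≤ x := hpmem.2
      have hpIcc : p ∈ Icc (0:ℝ) 1 := hFIcc hpF
      have hub : ∀ z ∈ Fx, z ≤ p := fun z hz => le_csSup hfinx.bddAbove hz
      have sgn : ∀ t ∈ Ioc p x, t < Φb t := by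
        intro t ht
        have htIcc : t ∈ Icc (0:ℝ) 1 := ⟨le_trans hpIcc.1 ht.1.le, le_trans ht.2 hx.2⟩
        rcases lt_trichotomy t (Φb t) with h1 | h1 | h1
        · exact h1
        · exfalso
          have : t ∈ Fx := ⟨hFco t htIcc h1.symm, ht.2⟩
          exact absurd (hub t this) (not_le.2 ht.1)
        · exfalso
          have econt : ContinuousOn (fun s => Φb s - s) (Icc t x) :=
            (Φbcont.sub continuous_id).continuousOn
          have hmem : (0:ℝ) ∈ Icc ((fun s => Φb s - s) t) ((fun s => Φb s - s) x) := by
            constructor <;> dsimp only <;> linarith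
          obtain ⟨z, hz, hz0⟩ := intermediate_value_Icc ht.2 econt hmem
          have hzIcc : z ∈ Icc (0:ℝ) 1 := ⟨le_trans htIcc.1 hz.1, le_trans hz.2 hx.2⟩
          have hzfix : Φb z = z := by dsimp only at hz0; linarith
          have hzFx : z ∈ Fx := ⟨hFco z hzIcc hzfix, hz.2⟩
          have := hub z hzFx
          have hpz : p < z := lt_of_lt_of_le ht.1 hz.1
          linarith
      have hWp : W x - W p = Φb x - Φb p := by
        rw [Wdiff p x, Φbdiff p x]
        rw [intervalIntegral.integral_of_le hpx, intervalIntegral.integral_of_le hpx]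
        apply setIntegral_congr_fun measurableSet_Ioc
        intro t ht
        have : t < Φb t := sgn t ht
        rw [hh, hψ]; dsimp only
        rw [Real.sign_of_pos (by linarith : 0 < Φb t - t)]; ring
      refine ⟨p, hpF, ?_⟩
      have hpfix : Φb p = p := hFfix p hpF
      have hd : Metric.infDist (Φb x) F ≤ dist (Φb x) p := Metric.infDist_le_dist_of_mem hpF
      rw [Real.dist_eq, abs_of_nonneg (by linarith : 0 ≤ Φb x - p)] at hd
      linarith
  set m := sInf (D '' Icc (0:ℝ) 1) with hm
  have hne : F.Nonempty := ⟨0, hF0⟩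
  have key : ∀ x ∈ Icc (0:ℝ) 1,
      (m + Metric.infDist (Φb x) F) * φb x ≤ (K0 + W x) * φb x := by
    intro x hx
    obtain ⟨p, hpF, hple⟩ := claimC x hx
    have hmD : m ≤ D p := csInf_le hbdd ⟨p, hFIcc hpF, rfl⟩
    have hDp : D p = K0 + W p := by
      rw [claimA p (hFIcc hpF), hFfix p hpF, sub_self, abs_zero, add_zero]
    have hcore : m + Metric.infDist (Φb x) F ≤ K0 + W x := by
      rw [hDp] at hmD; linarith
    exact mul_le_mul_of_nonneg_right hcore (φbnn x)
  have int1 : IntervalIntegrable (fun x => (m + Metric.infDist (Φb x) F) * φb x) volume 0 1 :=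
    ((continuous_const.add ((Metric.continuous_infDist_pt F).comp Φbcont)).mul
      φbcont).intervalIntegrable _ _
  have int2 : IntervalIntegrable (fun x => (K0 + W x) * φb x) volume 0 1 :=
    ((continuous_const.add Wcont).mul φbcont).intervalIntegrable _ _
  have mono := intervalIntegral.integral_mono_on h01 int1 int2 key
  have φbint1 : (∫ x in (0:ℝ)..1, φb x) = 1 := by rw [intcongr 0 1 mem0 mem1]; exact hint
  have lhs_eval : (∫ x in (0:ℝ)..1, (m + Metric.infDist (Φb x) F) * φb x)
      = m + ∫ u in (0:ℝ)..1, Metric.infDist u F := by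
    have split : (fun x => (m + Metric.infDist (Φb x) F) * φb x)
        = fun x => m * φb x + (Metric.infDist (Φb x) F) * φb x := by
      funext x; ring
    have cm : Continuous fun x : ℝ => m * φb x := continuous_const.mul φbcont
    have cd : Continuous fun x : ℝ => Metric.infDist (Φb x) F * φb x :=
      (((Metric.continuous_infDist_pt F).comp Φbcont).mul φbcont)
    rw [split]
    rw [intervalIntegral.integral_add (cm.intervalIntegrable _ _) (cd.intervalIntegrable _ _)]
    rw [intervalIntegral.integral_const_mul, φbint1, mul_one]
    congr 1
    have swap : (fun x => Metric.infDist (Φb x) F * φb x)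
        = fun x => φb x • ((fun u => Metric.infDist u F) ∘ Φb) x := by
      funext x; simp only [Function.comp, smul_eq_mul]; ring
    rw [swap]
    rw [intervalIntegral.integral_comp_smul_deriv'' Φbcont.continuousOn
      (fun x _ => (Φbderiv x).hasDerivWithinAt) φbcont.continuousOn
      ((Metric.continuous_infDist_pt F).continuousOn)]
    rw [Φb0, Φb1]
  have rhs_eval : (∫ x in (0:ℝ)..1, (K0 + W x) * φb x) = 0 := by
    have split : (fun x => (K0 + W x) * φb x) = fun x => K0 * φb x + W x * φb x := by
      funext x; ring
    have cK : Continuous fun x : ℝ => K0 * φb x := continuous_const.mul φbcont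
    have cW : Continuous fun x : ℝ => W x * φb x := Wcont.mul φbcont
    rw [split, intervalIntegral.integral_add (cK.intervalIntegrable _ _)
      (cW.intervalIntegrable _ _)]
    rw [intervalIntegral.integral_const_mul, φbint1, mul_one]
    have hfub := fub h φb hmeas φbcont.measurable C habs
      (fun t => by rw [abs_of_nonneg (φbnn t)]; exact (φbpos t).2)
    have hWφ : (∫ x in (0:ℝ)..1, W x * φb x) = ∫ t in (0:ℝ)..1, h t * (1 - Φb t) := by
      rw [hW]
      dsimp only
      rw [hfub]
      apply intervalIntegral.integral_congr
      intro t _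
      show h t * (∫ x in t..(1:ℝ), φb x) = h t * (1 - Φb t)
      rw [← Φbdiff t 1, Φb1]
    rw [hWφ]
    have hK0' : K0 = ∫ t in (0:ℝ)..1, h t * (Φb t - 1) := by
      rw [hK0]
      apply intervalIntegral.integral_congr
      intro t _
      rw [hh]; dsimp only; ring
    rw [hK0']
    have hneg : (∫ t in (0:ℝ)..1, h t * (1 - Φb t))
        = -∫ t in (0:ℝ)..1, h t * (Φb t - 1) := by
      rw [← intervalIntegral.integral_neg]
      apply intervalIntegral.integral_congr
      intro t _; ring
    rw [hneg]; ring
  have final : m + (∫ u in (0:ℝ)..1, Metric.infDist u F) ≤ 0 := by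
    rw [lhs_eval, rhs_eval] at mono; exact mono
  have hdist := distlb F hfin hne
  rw [hS] at hdist
  linarith
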